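/- arXiv:2404.03990 — 4 statements merged into one kernel-verified Lean document; each statement's English description precedes it below -/
import Mathlib

section
/- Bound preservation of the scheme: if Δt, h > 0, β > 0, |ρ^k_{i,j}| ≤ 1 for all i,j, and ρ^{k+1} solves the implicit finite-volume scheme ρ^{k+1}_{i,j} = ρ^k_{i,j} − (Δt/h)[F^{k+1}_{i+1/2,j} − F^{k+1}_{i−1/2,j} + F^{k+1}_{i,j+1/2} − F^{k+1}_{i,j−1/2}] with upwind fluxes F^{k+1}_{i+1/2,j} = M(ρ^{k+1}_{i,j}, ρ^{k+1}_{i+1,j})[u_{i+1/2,j}]⁺ + M(ρ^{k+1}_{i+1,j}, ρ^{k+1}_{i,j})[u_{i+1/2,j}]⁻ (and analogously in the j-direction) and mobility M(x,y) = β[1+x]⁺[1−y]⁺, then |ρ^{k+1}_{i,j}| ≤ 1 for all i,j. -/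
open Finset

/-- Discrete periodic convolution `[J⋆φ]_{i,j} = h² ∑_{n,m} J_{n,m} φ_{i−n,j−m}`. -/
noncomputable def conv {N : ℕ} [NeZero N] (h : ℝ) (J φ : ZMod N × ZMod N → ℝ) :
    ZMod N × ZMod N → ℝ :=
  fun p => h ^ 2 * ∑ q : ZMod N × ZMod N, J q * φ (p.1 - q.1, p.2 - q.2)

/-- Discrete inner product `⟨φ,ψ⟩_h = h² ∑_{i,j} φ_{i,j} ψ_{i,j}`. -/
noncomputable def ip {N : ℕ} [NeZero N] (h : ℝ) (φ ψ : ZMod N × ZMod N → ℝ) : ℝ :=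
  h ^ 2 * ∑ p : ZMod N × ZMod N, φ p * ψ p

/-- Degenerate upwind mobility `M(x,y) = β [1+x]⁺ [1−y]⁺`. -/
noncomputable def Mob (β x y : ℝ) : ℝ := β * max (1 + x) 0 * max (1 - y) 0

theorem bound_preservation {N : ℕ} [NeZero N] (Δt h β : ℝ)
    (hΔt : 0 < Δt) (hh : 0 < h) (hβ : 0 < β)
    (ρ0 ρ1 ux uy Fx Fy : ZMod N × ZMod N → ℝ)
    (hbound : ∀ p : ZMod N × ZMod N, |ρ0 p| ≤ 1)
    (hFx : ∀ p : ZMod N × ZMod N,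
      Fx p = Mob β (ρ1 p) (ρ1 (p.1 + 1, p.2)) * max (ux p) 0
        + Mob β (ρ1 (p.1 + 1, p.2)) (ρ1 p) * min (ux p) 0)
    (hFy : ∀ p : ZMod N × ZMod N,
      Fy p = Mob β (ρ1 p) (ρ1 (p.1, p.2 + 1)) * max (uy p) 0
        + Mob β (ρ1 (p.1, p.2 + 1)) (ρ1 p) * min (uy p) 0)
    (hupdate : ∀ p : ZMod N × ZMod N,
      ρ1 p = ρ0 p - (Δt / h) *
        (Fx p - Fx (p.1 - 1, p.2) + Fy p - Fy (p.1, p.2 - 1))) :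
    ∀ p : ZMod N × ZMod N, |ρ1 p| ≤ 1 := by
  intro p
  have hMnn : ∀ x y : ℝ, 0 ≤ Mob β x y := by
    intro x y
    unfold Mob
    have := hβ.le
    positivity
  have hcoef : 0 < Δt / h := div_pos hΔt hh
  have hb := abs_le.mp (hbound p)
  rw [abs_le]
  constructor
  · -- lower bound: suppose ρ1 p < -1
    by_contra hcon
    push_neg at hcon
    have h0 : max (1 + ρ1 p) 0 = 0 := max_eq_right (by linarith)
    have hM0 : ∀ y : ℝ, Mob β (ρ1 p) y = 0 := by
      intro y; unfold Mob; rw [h0]; ring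
    -- Fx p ≤ 0
    have hFxp : Fx p ≤ 0 := by
      rw [hFx p, hM0]
      have : Mob β (ρ1 (p.1 + 1, p.2)) (ρ1 p) * min (ux p) 0 ≤ 0 :=
        mul_nonpos_of_nonneg_of_nonpos (hMnn _ _) (min_le_right _ _)
      linarith
    have hFyp : Fy p ≤ 0 := by
      rw [hFy p, hM0]
      have : Mob β (ρ1 (p.1, p.2 + 1)) (ρ1 p) * min (uy p) 0 ≤ 0 :=
        mul_nonpos_of_nonneg_of_nonpos (hMnn _ _) (min_le_right _ _)
      linarith
    have hFxl : 0 ≤ Fx (p.1 - 1, p.2) := by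
      have e := hFx (p.1 - 1, p.2)
      simp only [sub_add_cancel] at e
      rw [e, hM0]
      have : 0 ≤ Mob β (ρ1 (p.1 - 1, p.2)) (ρ1 p) * max (ux (p.1 - 1, p.2)) 0 :=
        mul_nonneg (hMnn _ _) (le_max_right _ _)
      linarith
    have hFyl : 0 ≤ Fy (p.1, p.2 - 1) := by
      have e := hFy (p.1, p.2 - 1)
      simp only [sub_add_cancel] at e
      rw [e, hM0]
      have : 0 ≤ Mob β (ρ1 (p.1, p.2 - 1)) (ρ1 p) * max (uy (p.1, p.2 - 1)) 0 :=
        mul_nonneg (hMnn _ _) (le_max_right _ _)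
      linarith
    have hdiv : Fx p - Fx (p.1 - 1, p.2) + Fy p - Fy (p.1, p.2 - 1) ≤ 0 := by linarith
    have := hupdate p
    nlinarith [mul_nonpos_of_nonneg_of_nonpos hcoef.le hdiv]
  · -- upper bound: suppose ρ1 p > 1
    by_contra hcon
    push_neg at hcon
    have h0 : max (1 - ρ1 p) 0 = 0 := max_eq_right (by linarith)
    have hM0 : ∀ x : ℝ, Mob β x (ρ1 p) = 0 := by
      intro x; unfold Mob; rw [h0]; ring
    have hFxp : 0 ≤ Fx p := by
      rw [hFx p, hM0]
      have : 0 ≤ Mob β (ρ1 p) (ρ1 (p.1 + 1, p.2)) * max (ux p) 0 :=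
        mul_nonneg (hMnn _ _) (le_max_right _ _)
      linarith
    have hFyp : 0 ≤ Fy p := by
      rw [hFy p, hM0]
      have : 0 ≤ Mob β (ρ1 p) (ρ1 (p.1, p.2 + 1)) * max (uy p) 0 :=
        mul_nonneg (hMnn _ _) (le_max_right _ _)
      linarith
    have hFxl : Fx (p.1 - 1, p.2) ≤ 0 := by
      have e := hFx (p.1 - 1, p.2)
      simp only [sub_add_cancel] at e
      rw [e, hM0]
      have : Mob β (ρ1 p) (ρ1 (p.1 - 1, p.2)) * min (ux (p.1 - 1, p.2)) 0 ≤ 0 :=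
        mul_nonpos_of_nonneg_of_nonpos (hMnn _ _) (min_le_right _ _)
      linarith
    have hFyl : Fy (p.1, p.2 - 1) ≤ 0 := by
      have e := hFy (p.1, p.2 - 1)
      simp only [sub_add_cancel] at e
      rw [e, hM0]
      have : Mob β (ρ1 p) (ρ1 (p.1, p.2 - 1)) * min (uy (p.1, p.2 - 1)) 0 ≤ 0 :=
        mul_nonpos_of_nonneg_of_nonpos (hMnn _ _) (min_le_right _ _)
      linarith
    have hdiv : 0 ≤ Fx p - Fx (p.1 - 1, p.2) + Fy p - Fy (p.1, p.2 - 1) := by linarith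
    have := hupdate p
    nlinarith [mul_nonneg hcoef.le hdiv]
end

section
/- For the implicit upwind scheme with mobility M(x,y) = β[1+x]⁺[1−y]⁺ and velocities u_{i+1/2,j} = −(w_{i+1,j} − w_{i,j})/h, u_{i,j+1/2} = −(w_{i,j+1} − w_{i,j})/h, the discrete chemical-potential pairing is nonpositive: ⟨ρ^{k+1} − ρ^k, w⟩_h ≤ 0, where ρ^{k+1} − ρ^k is given by the conservative flux update. -/
open Finset

theorem chemical_potential_pairing_nonpos {N : ℕ} [NeZero N] (Δt h β : ℝ)
    (hΔt : 0 < Δt) (hh : 0 < h) (hβ : 0 < β)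
    (ρ0 ρ1 w ux uy Fx Fy : ZMod N × ZMod N → ℝ)
    (hux : ∀ p : ZMod N × ZMod N, ux p = -(w (p.1 + 1, p.2) - w p) / h)
    (huy : ∀ p : ZMod N × ZMod N, uy p = -(w (p.1, p.2 + 1) - w p) / h)
    (hFx : ∀ p : ZMod N × ZMod N,
      Fx p = Mob β (ρ1 p) (ρ1 (p.1 + 1, p.2)) * max (ux p) 0
        + Mob β (ρ1 (p.1 + 1, p.2)) (ρ1 p) * min (ux p) 0)
    (hFy : ∀ p : ZMod N × ZMod N,
      Fy p = Mob β (ρ1 p) (ρ1 (p.1, p.2 + 1)) * max (uy p) 0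
        + Mob β (ρ1 (p.1, p.2 + 1)) (ρ1 p) * min (uy p) 0)
    (hupdate : ∀ p : ZMod N × ZMod N,
      ρ1 p - ρ0 p = -(Δt / h) *
        (Fx p - Fx (p.1 - 1, p.2) + Fy p - Fy (p.1, p.2 - 1))) :
    ip h (fun p => ρ1 p - ρ0 p) w ≤ 0 := by
  -- nonnegativity of mobility
  have hMob : ∀ x y : ℝ, 0 ≤ Mob β x y := by
    intro x y; unfold Mob; positivity
  -- each flux times velocity is nonnegative
  have hFxu : ∀ p, 0 ≤ Fx p * ux p := by
    intro p
    rw [hFx p]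
    have h1 := hMob (ρ1 p) (ρ1 (p.1 + 1, p.2))
    have h2 := hMob (ρ1 (p.1 + 1, p.2)) (ρ1 p)
    rcases le_or_gt 0 (ux p) with hu | hu
    · rw [max_eq_left hu, min_eq_right hu]
      nlinarith [mul_nonneg h1 (mul_self_nonneg (ux p))]
    · rw [max_eq_right hu.le, min_eq_left hu.le]
      nlinarith [mul_nonneg h2 (mul_self_nonneg (ux p))]
  have hFyu : ∀ p, 0 ≤ Fy p * uy p := by
    intro p
    rw [hFy p]
    have h1 := hMob (ρ1 p) (ρ1 (p.1, p.2 + 1))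
    have h2 := hMob (ρ1 (p.1, p.2 + 1)) (ρ1 p)
    rcases le_or_gt 0 (uy p) with hu | hu
    · rw [max_eq_left hu, min_eq_right hu]
      nlinarith [mul_nonneg h1 (mul_self_nonneg (uy p))]
    · rw [max_eq_right hu.le, min_eq_left hu.le]
      nlinarith [mul_nonneg h2 (mul_self_nonneg (uy p))]
  -- shift identities (summation by parts)
  have shiftx : ∑ p : ZMod N × ZMod N, Fx (p.1 - 1, p.2) * w p
      = ∑ p : ZMod N × ZMod N, Fx p * w (p.1 + 1, p.2) := by
    apply Fintype.sum_equiv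
      (Equiv.prodCongr (Equiv.subRight (1 : ZMod N)) (Equiv.refl (ZMod N)))
    intro p
    simp [Prod.map, Equiv.subRight]
  have shifty : ∑ p : ZMod N × ZMod N, Fy (p.1, p.2 - 1) * w p
      = ∑ p : ZMod N × ZMod N, Fy p * w (p.1, p.2 + 1) := by
    apply Fintype.sum_equiv
      (Equiv.prodCongr (Equiv.refl (ZMod N)) (Equiv.subRight (1 : ZMod N)))
    intro p
    simp [Prod.map, Equiv.subRight]
  have hw_ux : ∀ p : ZMod N × ZMod N, w p - w (p.1 + 1, p.2) = h * ux p := by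
    intro p; rw [hux p]; field_simp; ring
  have hw_uy : ∀ p : ZMod N × ZMod N, w p - w (p.1, p.2 + 1) = h * uy p := by
    intro p; rw [huy p]; field_simp; ring
  set Sx := ∑ p : ZMod N × ZMod N, Fx p * ux p with hSx
  set Sy := ∑ p : ZMod N × ZMod N, Fy p * uy p with hSy
  have ex : (∑ p : ZMod N × ZMod N, Fx p * w p)
      - (∑ p : ZMod N × ZMod N, Fx p * w (p.1 + 1, p.2)) = h * Sx := by
    rw [hSx, Finset.mul_sum, ← Finset.sum_sub_distrib]
    refine Finset.sum_congr rfl fun p _ => ?_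
    rw [← mul_sub, hw_ux p]; ring
  have ey : (∑ p : ZMod N × ZMod N, Fy p * w p)
      - (∑ p : ZMod N × ZMod N, Fy p * w (p.1, p.2 + 1)) = h * Sy := by
    rw [hSy, Finset.mul_sum, ← Finset.sum_sub_distrib]
    refine Finset.sum_congr rfl fun p _ => ?_
    rw [← mul_sub, hw_uy p]; ring
  have hid : ip h (fun p => ρ1 p - ρ0 p) w = -(Δt * h) * (h * Sx + h * Sy) := by
    unfold ip
    have expand : ∀ p : ZMod N × ZMod N, (ρ1 p - ρ0 p) * w p
        = -(Δt / h) * (Fx p * w p - Fx (p.1 - 1, p.2) * w p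
          + Fy p * w p - Fy (p.1, p.2 - 1) * w p) := by
      intro p; rw [hupdate p]; ring
    rw [Finset.sum_congr rfl (fun p _ => expand p), ← Finset.mul_sum]
    simp only [Finset.sum_sub_distrib, Finset.sum_add_distrib]
    rw [shiftx, shifty]
    have : (∑ p : ZMod N × ZMod N, Fx p * w p)
        - (∑ p : ZMod N × ZMod N, Fx p * w (p.1 + 1, p.2))
        + (∑ p : ZMod N × ZMod N, Fy p * w p)
        - (∑ p : ZMod N × ZMod N, Fy p * w (p.1, p.2 + 1))
        = h * Sx + h * Sy := by linarith
    rw [this]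
    field_simp
  rw [hid]
  have hsx : 0 ≤ Sx := Finset.sum_nonneg fun p _ => hFxu p
  have hsy : 0 ≤ Sy := Finset.sum_nonneg fun p _ => hFyu p
  have h1 : 0 ≤ h * Sx + h * Sy := by positivity
  have h2 : 0 ≤ Δt * h := by positivity
  nlinarith
end

section
/- Pseudo-energy stability: under the scheme with convex-splitting chemical potential w^{k+1}_{i,j} = f_c'(ρ^{k+1}_{i,j}) − f_e'(ρ^k_{i,j}) + 2ρ^{k+1}_{i,j} − 2[J⋆ρ^k]_{i,j}, upwind degenerate-mobility fluxes, and pseudo-energy Ê_h(a,b) := E_h(a) + ‖a−b‖²_{ℓ²} + ⟨J⋆(a−b), a−b⟩_h where E_h(a) := h² ∑_{i,j}[f_c(a_{i,j}) − f_e(a_{i,j}) + a_{i,j}²] − ⟨J⋆a, a⟩_h, one has Ê_h(ρ^{k+1}, ρ^k) − Ê_h(ρ^k, ρ^{k−1}) ≤ ‖ρ^{k+1} − ρ^k‖²_{ℓ²}, provided J is nonnegative, even, and h²∑_{n,m} J_{n,m} ≤ 1. -/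
open Finset

/-- Discrete free energy. -/
noncomputable def Eh {N : ℕ} [NeZero N] (h : ℝ) (fc fe : ℝ → ℝ)
    (J a : ZMod N × ZMod N → ℝ) : ℝ :=
  h ^ 2 * ∑ p : ZMod N × ZMod N, (fc (a p) - fe (a p) + (a p) ^ 2)
    - ip h (conv h J a) a

/-- Pseudo energy. -/
noncomputable def pseudoE {N : ℕ} [NeZero N] (h : ℝ) (fc fe : ℝ → ℝ)
    (J a b : ZMod N × ZMod N → ℝ) : ℝ :=
  Eh h fc fe J a + ip h (fun p => a p - b p) (fun p => a p - b p)
    + ip h (conv h J (fun p => a p - b p)) (fun p => a p - b p)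

lemma supp_line (f : ℝ → ℝ) (hf : ConvexOn ℝ Set.univ f) (hd : Differentiable ℝ f) (x y : ℝ) :
    deriv f x * (y - x) ≤ f y - f x := by
  rcases lt_trichotomy x y with hxy | rfl | hyx
  · have h1 := hf.deriv_le_slope (Set.mem_univ x) (Set.mem_univ y) hxy (hd x)
    rw [slope_def_field] at h1
    have := (le_div_iff₀ (by linarith : (0:ℝ) < y - x)).mp h1
    linarith
  · simp
  · have h1 := hf.slope_le_deriv (Set.mem_univ y) (Set.mem_univ x) hyx (hd x)
    rw [slope_def_field] at h1
    have := (div_le_iff₀ (by linarith : (0:ℝ) < x - y)).mp h1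
    nlinarith

lemma conv_ip_expand {N : ℕ} [NeZero N] (h : ℝ) (J a b : ZMod N × ZMod N → ℝ) :
    ip h (conv h J a) b
      = h ^ 2 * h ^ 2 * ∑ q : ZMod N × ZMod N, ∑ p : ZMod N × ZMod N,
          J q * (a p * b (p + q)) := by
  have hpq : ∀ p q : ZMod N × ZMod N, (p.1 - q.1, p.2 - q.2) = p - q := fun p q => rfl
  simp only [ip, conv, hpq]
  have step1 : ∀ p : ZMod N × ZMod N,
      (h ^ 2 * ∑ q : ZMod N × ZMod N, J q * a (p - q)) * b p
        = h ^ 2 * ∑ q : ZMod N × ZMod N, J q * (a (p - q) * b p) := by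
    intro p
    rw [mul_assoc, Finset.sum_mul]
    congr 1; apply Finset.sum_congr rfl; intros; ring
  simp only [step1]
  rw [← Finset.mul_sum, ← mul_assoc]
  congr 1
  rw [Finset.sum_comm]
  apply Finset.sum_congr rfl
  intro q _
  rw [← Equiv.sum_comp (Equiv.addRight q) (fun p => J q * (a (p - q) * b p))]
  apply Finset.sum_congr rfl
  intro p _
  simp [Equiv.coe_addRight, add_sub_cancel_right]

lemma conv_ip_symm {N : ℕ} [NeZero N] (h : ℝ) (J : ZMod N × ZMod N → ℝ)
    (hJeven : ∀ q : ZMod N × ZMod N, J q = J (-q.1, -q.2))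
    (a b : ZMod N × ZMod N → ℝ) :
    ip h (conv h J a) b = ip h (conv h J b) a := by
  have hJ : ∀ q : ZMod N × ZMod N, J (-q) = J q := by
    intro q; rw [hJeven q]; rfl
  rw [conv_ip_expand, conv_ip_expand]
  congr 1
  rw [← Equiv.sum_comp (Equiv.neg (ZMod N × ZMod N))
    (fun q => ∑ p : ZMod N × ZMod N, J q * (a p * b (p + q)))]
  apply Finset.sum_congr rfl
  intro q _
  simp only [Equiv.neg_apply, hJ]
  rw [← Equiv.sum_comp (Equiv.addRight q) (fun p => J q * (a p * b (p + -q)))]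
  apply Finset.sum_congr rfl
  intro p _
  simp only [Equiv.coe_addRight, add_neg_cancel_right]
  ring

lemma ip_self_nonneg {N : ℕ} [NeZero N] (h : ℝ) (φ : ZMod N × ZMod N → ℝ) :
    0 ≤ ip h φ φ :=
  mul_nonneg (sq_nonneg h) (Finset.sum_nonneg fun p _ => mul_self_nonneg _)

lemma conv_ip_lower {N : ℕ} [NeZero N] (h : ℝ) (J : ZMod N × ZMod N → ℝ)
    (hJpos : ∀ q, 0 ≤ J q)
    (hJsum : h ^ 2 * ∑ q : ZMod N × ZMod N, J q ≤ 1)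
    (φ : ZMod N × ZMod N → ℝ) :
    0 ≤ ip h φ φ + ip h (conv h J φ) φ := by
  have hshift : ∀ q : ZMod N × ZMod N,
      ∑ p : ZMod N × ZMod N, φ (p + q) * φ (p + q) = ∑ p : ZMod N × ZMod N, φ p * φ p := by
    intro q
    rw [← Equiv.sum_comp (Equiv.subRight q) (fun p => φ (p + q) * φ (p + q))]
    apply Finset.sum_congr rfl
    intro p _
    simp [Equiv.subRight, sub_add_cancel]
  have key : ∀ q : ZMod N × ZMod N,
      -(J q * ∑ p : ZMod N × ZMod N, φ p * φ p)
        ≤ ∑ p : ZMod N × ZMod N, J q * (φ p * φ (p + q)) := by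
    intro q
    have h1 : ∀ p : ZMod N × ZMod N,
        -(J q * ((φ p * φ p + φ (p + q) * φ (p + q)) / 2)) ≤ J q * (φ p * φ (p + q)) := by
      intro p
      nlinarith [hJpos q, sq_nonneg (φ p + φ (p + q))]
    calc -(J q * ∑ p : ZMod N × ZMod N, φ p * φ p)
        = ∑ p : ZMod N × ZMod N,
            -(J q * ((φ p * φ p + φ (p + q) * φ (p + q)) / 2)) := by
          have e1 : ∑ p : ZMod N × ZMod N,
              -(J q * ((φ p * φ p + φ (p + q) * φ (p + q)) / 2))
                = -(J q / 2) * (∑ p : ZMod N × ZMod N, φ p * φ p)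
                  + -(J q / 2) * (∑ p : ZMod N × ZMod N, φ (p + q) * φ (p + q)) := by
            rw [Finset.mul_sum, Finset.mul_sum, ← Finset.sum_add_distrib]
            apply Finset.sum_congr rfl; intros; ring
          rw [e1, hshift q]; ring
      _ ≤ _ := Finset.sum_le_sum fun p _ => h1 p
  have e2 := conv_ip_expand h J φ φ
  have hsum2 : -((∑ q : ZMod N × ZMod N, J q) * ∑ p : ZMod N × ZMod N, φ p * φ p)
      ≤ ∑ q : ZMod N × ZMod N, ∑ p : ZMod N × ZMod N, J q * (φ p * φ (p + q)) := by
    calc -((∑ q : ZMod N × ZMod N, J q) * ∑ p : ZMod N × ZMod N, φ p * φ p)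
        = ∑ q : ZMod N × ZMod N, -(J q * ∑ p : ZMod N × ZMod N, φ p * φ p) := by
          rw [Finset.sum_mul, ← Finset.sum_neg_distrib]
      _ ≤ _ := Finset.sum_le_sum fun q _ => key q
  have hφ : (0:ℝ) ≤ ∑ p : ZMod N × ZMod N, φ p * φ p :=
    Finset.sum_nonneg fun p _ => mul_self_nonneg _
  have hJS : (0:ℝ) ≤ ∑ q : ZMod N × ZMod N, J q :=
    Finset.sum_nonneg fun q _ => hJpos q
  simp only [ip] at e2 ⊢
  rw [e2]
  nlinarith [sq_nonneg h, sq_nonneg (h^2),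
    mul_le_mul_of_nonneg_left hsum2 (mul_nonneg (sq_nonneg h) (sq_nonneg h)),
    mul_le_mul_of_nonneg_right hJsum (mul_nonneg (sq_nonneg h) hφ)]

lemma shift_sum {N : ℕ} [NeZero N] (e : ZMod N × ZMod N) (f : ZMod N × ZMod N → ℝ) :
    ∑ p : ZMod N × ZMod N, f (p + e) = ∑ p : ZMod N × ZMod N, f p := by
  simpa using Equiv.sum_comp (Equiv.addRight e) f

lemma conv_split {N : ℕ} [NeZero N] (h : ℝ) (J ρ1 ρ0 : ZMod N × ZMod N → ℝ) :
    ip h (conv h J ρ1) ρ1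
      = ip h (conv h J ρ0) ρ0 + ip h (conv h J ρ0) (fun p => ρ1 p - ρ0 p)
        + ip h (conv h J (fun p => ρ1 p - ρ0 p)) ρ0
        + ip h (conv h J (fun p => ρ1 p - ρ0 p)) (fun p => ρ1 p - ρ0 p) := by
  simp only [conv_ip_expand]
  rw [← mul_add, ← mul_add, ← mul_add, ← Finset.sum_add_distrib, ← Finset.sum_add_distrib,
    ← Finset.sum_add_distrib]
  congr 1
  apply Finset.sum_congr rfl
  intro q _
  rw [← Finset.sum_add_distrib, ← Finset.sum_add_distrib, ← Finset.sum_add_distrib]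
  apply Finset.sum_congr rfl
  intro p _
  ring
theorem pseudo_energy_stability {N : ℕ} [NeZero N] (Δt h β : ℝ)
    (hΔt : 0 < Δt) (hh : 0 < h) (hβ : 0 < β)
    (fc fe : ℝ → ℝ)
    (hfc : ConvexOn ℝ Set.univ fc) (hfcd : Differentiable ℝ fc)
    (hfe : ConvexOn ℝ Set.univ fe) (hfed : Differentiable ℝ fe)
    (J : ZMod N × ZMod N → ℝ)
    (hJpos : ∀ q, 0 ≤ J q)
    (hJeven : ∀ q : ZMod N × ZMod N, J q = J (-q.1, -q.2))
    (hJsum : h ^ 2 * ∑ q : ZMod N × ZMod N, J q ≤ 1)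
    (ρm1 ρ0 ρ1 w ux uy Fx Fy : ZMod N × ZMod N → ℝ)
    (hw : ∀ p : ZMod N × ZMod N,
      w p = deriv fc (ρ1 p) - deriv fe (ρ0 p) + 2 * ρ1 p - 2 * conv h J ρ0 p)
    (hux : ∀ p : ZMod N × ZMod N, ux p = -(w (p.1 + 1, p.2) - w p) / h)
    (huy : ∀ p : ZMod N × ZMod N, uy p = -(w (p.1, p.2 + 1) - w p) / h)
    (hFx : ∀ p : ZMod N × ZMod N,
      Fx p = Mob β (ρ1 p) (ρ1 (p.1 + 1, p.2)) * max (ux p) 0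
        + Mob β (ρ1 (p.1 + 1, p.2)) (ρ1 p) * min (ux p) 0)
    (hFy : ∀ p : ZMod N × ZMod N,
      Fy p = Mob β (ρ1 p) (ρ1 (p.1, p.2 + 1)) * max (uy p) 0
        + Mob β (ρ1 (p.1, p.2 + 1)) (ρ1 p) * min (uy p) 0)
    (hupdate : ∀ p : ZMod N × ZMod N,
      ρ1 p - ρ0 p = -(Δt / h) *
        (Fx p - Fx (p.1 - 1, p.2) + Fy p - Fy (p.1, p.2 - 1))) :
    pseudoE h fc fe J ρ1 ρ0 - pseudoE h fc fe J ρ0 ρm1 ≤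
      ip h (fun p => ρ1 p - ρ0 p) (fun p => ρ1 p - ρ0 p) := by
  -- flux sign
  have hMob : ∀ x y : ℝ, 0 ≤ Mob β x y := fun x y =>
    mul_nonneg (mul_nonneg hβ.le (le_max_right _ _)) (le_max_right _ _)
  have hFxu : ∀ p : ZMod N × ZMod N, 0 ≤ Fx p * ux p := by
    intro p; rw [hFx p]
    rcases le_or_gt 0 (ux p) with hu | hu
    · rw [max_eq_left hu, min_eq_right hu]
      nlinarith [mul_nonneg (hMob (ρ1 p) (ρ1 (p.1 + 1, p.2))) (mul_self_nonneg (ux p))]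
    · rw [max_eq_right hu.le, min_eq_left hu.le]
      nlinarith [mul_nonneg (hMob (ρ1 (p.1 + 1, p.2)) (ρ1 p)) (mul_self_nonneg (ux p))]
  have hFyu : ∀ p : ZMod N × ZMod N, 0 ≤ Fy p * uy p := by
    intro p; rw [hFy p]
    rcases le_or_gt 0 (uy p) with hu | hu
    · rw [max_eq_left hu, min_eq_right hu]
      nlinarith [mul_nonneg (hMob (ρ1 p) (ρ1 (p.1, p.2 + 1))) (mul_self_nonneg (uy p))]
    · rw [max_eq_right hu.le, min_eq_left hu.le]
      nlinarith [mul_nonneg (hMob (ρ1 (p.1, p.2 + 1)) (ρ1 p)) (mul_self_nonneg (uy p))]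
  -- summation by parts
  have hshx : ∑ p : ZMod N × ZMod N, w p * Fx (p.1 - 1, p.2)
      = ∑ p : ZMod N × ZMod N, w (p.1 + 1, p.2) * Fx p := by
    rw [← shift_sum ((1 : ZMod N), (0 : ZMod N)) (fun p => w p * Fx (p.1 - 1, p.2))]
    apply Finset.sum_congr rfl
    intro p _
    have h1 : p + ((1 : ZMod N), (0 : ZMod N)) = (p.1 + 1, p.2) := by ext <;> simp
    rw [h1]; simp
  have hshy : ∑ p : ZMod N × ZMod N, w p * Fy (p.1, p.2 - 1)
      = ∑ p : ZMod N × ZMod N, w (p.1, p.2 + 1) * Fy p := by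
    rw [← shift_sum ((0 : ZMod N), (1 : ZMod N)) (fun p => w p * Fy (p.1, p.2 - 1))]
    apply Finset.sum_congr rfl
    intro p _
    have h1 : p + ((0 : ZMod N), (1 : ZMod N)) = (p.1, p.2 + 1) := by ext <;> simp
    rw [h1]; simp
  have hwux : ∀ p : ZMod N × ZMod N, w p - w (p.1 + 1, p.2) = h * ux p := by
    intro p; rw [hux p]; field_simp; ring
  have hwuy : ∀ p : ZMod N × ZMod N, w p - w (p.1, p.2 + 1) = h * uy p := by
    intro p; rw [huy p]; field_simp; ring
  have hkey : ∑ p : ZMod N × ZMod N, w p * (ρ1 p - ρ0 p)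
      = -Δt * (∑ p : ZMod N × ZMod N, Fx p * ux p + ∑ p : ZMod N × ZMod N, Fy p * uy p) := by
    have e1 : ∑ p : ZMod N × ZMod N, w p * (ρ1 p - ρ0 p)
        = -(Δt / h) * (∑ p : ZMod N × ZMod N, w p * Fx p
            - ∑ p : ZMod N × ZMod N, w p * Fx (p.1 - 1, p.2)
            + ∑ p : ZMod N × ZMod N, w p * Fy p
            - ∑ p : ZMod N × ZMod N, w p * Fy (p.1, p.2 - 1)) := by
      calc ∑ p : ZMod N × ZMod N, w p * (ρ1 p - ρ0 p)
          = ∑ p : ZMod N × ZMod N, (-(Δt / h) * (w p * Fx p - w p * Fx (p.1 - 1, p.2)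
              + w p * Fy p - w p * Fy (p.1, p.2 - 1))) := by
            apply Finset.sum_congr rfl; intro p _; rw [hupdate p]; ring
        _ = _ := by
            rw [← Finset.mul_sum]
            congr 1
            rw [Finset.sum_sub_distrib, Finset.sum_add_distrib, Finset.sum_sub_distrib]
    rw [e1, hshx, hshy]
    have e2 : ∑ p : ZMod N × ZMod N, w p * Fx p - ∑ p : ZMod N × ZMod N, w (p.1 + 1, p.2) * Fx p
        = h * ∑ p : ZMod N × ZMod N, Fx p * ux p := by
      rw [← Finset.sum_sub_distrib, Finset.mul_sum]
      apply Finset.sum_congr rfl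
      intro p _
      calc w p * Fx p - w (p.1 + 1, p.2) * Fx p = (w p - w (p.1 + 1, p.2)) * Fx p := by ring
        _ = h * ux p * Fx p := by rw [hwux p]
        _ = h * (Fx p * ux p) := by ring
    have e3 : ∑ p : ZMod N × ZMod N, w p * Fy p - ∑ p : ZMod N × ZMod N, w (p.1, p.2 + 1) * Fy p
        = h * ∑ p : ZMod N × ZMod N, Fy p * uy p := by
      rw [← Finset.sum_sub_distrib, Finset.mul_sum]
      apply Finset.sum_congr rfl
      intro p _
      calc w p * Fy p - w (p.1, p.2 + 1) * Fy p = (w p - w (p.1, p.2 + 1)) * Fy p := by ring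
        _ = h * uy p * Fy p := by rw [hwuy p]
        _ = h * (Fy p * uy p) := by ring
    have e4 : ∑ p : ZMod N × ZMod N, w p * Fx p
        - ∑ p : ZMod N × ZMod N, w (p.1 + 1, p.2) * Fx p
        + ∑ p : ZMod N × ZMod N, w p * Fy p
        - ∑ p : ZMod N × ZMod N, w (p.1, p.2 + 1) * Fy p
        = h * (∑ p : ZMod N × ZMod N, Fx p * ux p + ∑ p : ZMod N × ZMod N, Fy p * uy p) := by
      rw [mul_add, ← e2, ← e3]; ring
    rw [e4]
    field_simp
  have hwδ : ∑ p : ZMod N × ZMod N, w p * (ρ1 p - ρ0 p) ≤ 0 := by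
    rw [hkey]
    have h1 : 0 ≤ ∑ p : ZMod N × ZMod N, Fx p * ux p + ∑ p : ZMod N × ZMod N, Fy p * uy p :=
      add_nonneg (Finset.sum_nonneg fun p _ => hFxu p) (Finset.sum_nonneg fun p _ => hFyu p)
    nlinarith
  -- convexity pointwise
  have hpoint : ∀ p : ZMod N × ZMod N,
      fc (ρ1 p) - fe (ρ1 p) + ρ1 p ^ 2 - (fc (ρ0 p) - fe (ρ0 p) + ρ0 p ^ 2)
        ≤ (deriv fc (ρ1 p) - deriv fe (ρ0 p) + 2 * ρ1 p) * (ρ1 p - ρ0 p)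
          - (ρ1 p - ρ0 p) * (ρ1 p - ρ0 p) := by
    intro p
    have h1 := supp_line fc hfc hfcd (ρ1 p) (ρ0 p)
    have h2 := supp_line fe hfe hfed (ρ0 p) (ρ1 p)
    nlinarith [h1, h2]
  have hsum1 : ∑ p : ZMod N × ZMod N, (fc (ρ1 p) - fe (ρ1 p) + ρ1 p ^ 2)
      - ∑ p : ZMod N × ZMod N, (fc (ρ0 p) - fe (ρ0 p) + ρ0 p ^ 2)
      ≤ ∑ p : ZMod N × ZMod N, w p * (ρ1 p - ρ0 p)
        + 2 * ∑ p : ZMod N × ZMod N, conv h J ρ0 p * (ρ1 p - ρ0 p)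
        - ∑ p : ZMod N × ZMod N, (ρ1 p - ρ0 p) * (ρ1 p - ρ0 p) := by
    have e1 : ∑ p : ZMod N × ZMod N, w p * (ρ1 p - ρ0 p)
        + 2 * ∑ p : ZMod N × ZMod N, conv h J ρ0 p * (ρ1 p - ρ0 p)
        - ∑ p : ZMod N × ZMod N, (ρ1 p - ρ0 p) * (ρ1 p - ρ0 p)
        = ∑ p : ZMod N × ZMod N,
            ((deriv fc (ρ1 p) - deriv fe (ρ0 p) + 2 * ρ1 p) * (ρ1 p - ρ0 p)
              - (ρ1 p - ρ0 p) * (ρ1 p - ρ0 p)) := by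
      rw [Finset.mul_sum, ← Finset.sum_add_distrib, ← Finset.sum_sub_distrib]
      apply Finset.sum_congr rfl; intro p _
      rw [hw p]; ring
    rw [e1, ← Finset.sum_sub_distrib]
    exact Finset.sum_le_sum fun p _ => hpoint p
  -- assemble
  have hipdef : ∀ a b : ZMod N × ZMod N → ℝ,
      ip h a b = h ^ 2 * ∑ p : ZMod N × ZMod N, a p * b p := fun a b => rfl
  have hsplit := conv_split h J ρ1 ρ0
  have hsymm := conv_ip_symm h J hJeven (fun p => ρ1 p - ρ0 p) ρ0
  have hlow := conv_ip_lower h J hJpos hJsum (fun p => ρ0 p - ρm1 p)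
  have hδδ : (0:ℝ) ≤ h ^ 2 * ∑ p : ZMod N × ZMod N, (ρ1 p - ρ0 p) * (ρ1 p - ρ0 p) :=
    mul_nonneg (sq_nonneg h) (Finset.sum_nonneg fun p _ => mul_self_nonneg _)
  have hwδ2 : h ^ 2 * ∑ p : ZMod N × ZMod N, w p * (ρ1 p - ρ0 p) ≤ 0 := by
    have := mul_le_mul_of_nonneg_left hwδ (sq_nonneg h)
    simpa using this
  have hE := mul_le_mul_of_nonneg_left hsum1 (sq_nonneg h)
  simp only [pseudoE, Eh, hipdef] at hsplit hsymm hlow ⊢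
  nlinarith [hE, hsplit, hsymm, hlow, hδδ, hwδ2]
end

section
/- Semi-discrete energy dissipation: if t ↦ ρ(t) is a differentiable grid-function-valued curve satisfying the semi-discrete scheme (the conservative upwind flux update with velocities derived from w(t)_{i,j} = f'(ρ(t)_{i,j}) + 2ρ(t)_{i,j} − 2[J⋆ρ(t)]_{i,j}), then the discrete free energy E_h(t) := h² ∑_{i,j}[f(ρ(t)_{i,j}) + ρ(t)_{i,j}²] − ⟨J⋆ρ(t), ρ(t)⟩_h satisfies dE_h/dt = ⟨ρ'(t), w(t)⟩_h ≤ 0. -/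
open Finset

lemma shift_sum_s11 {N : ℕ} [NeZero N] (g : ZMod N × ZMod N → ℝ) (a b : ZMod N) :
    ∑ p : ZMod N × ZMod N, g (p.1 - a, p.2 - b) = ∑ p : ZMod N × ZMod N, g p := by
  apply Fintype.sum_equiv ((Equiv.subRight a).prodCongr (Equiv.subRight b))
  intro p; rfl

lemma conv_symm {N : ℕ} [NeZero N] (h : ℝ) (J : ZMod N × ZMod N → ℝ)
    (hJeven : ∀ q : ZMod N × ZMod N, J q = J (-q.1, -q.2))
    (φ ψ : ZMod N × ZMod N → ℝ) :
    ∑ p : ZMod N × ZMod N, conv h J φ p * ψ p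
      = ∑ p : ZMod N × ZMod N, conv h J ψ p * φ p := by
  have key : ∀ φ ψ : ZMod N × ZMod N → ℝ,
      ∑ p : ZMod N × ZMod N, conv h J φ p * ψ p
        = h ^ 2 * ∑ q : ZMod N × ZMod N, ∑ p : ZMod N × ZMod N,
            J q * (φ p * ψ (p.1 + q.1, p.2 + q.2)) := by
    intro φ ψ
    simp only [conv, Finset.sum_mul, mul_assoc, ← Finset.mul_sum]
    rw [Finset.sum_comm]
    refine congrArg _ (Finset.sum_congr rfl fun q _ => ?_)
    rw [Finset.mul_sum]
    calc ∑ x : ZMod N × ZMod N, J q * (φ (x.1 - q.1, x.2 - q.2) * ψ x)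
        = ∑ x : ZMod N × ZMod N,
            J q * (φ (x.1 - q.1, x.2 - q.2) * ψ (x.1 - q.1 + q.1, x.2 - q.2 + q.2)) := by
          simp [sub_add_cancel]
      _ = ∑ p : ZMod N × ZMod N, J q * (φ p * ψ (p.1 + q.1, p.2 + q.2)) :=
          shift_sum_s11 (fun p => J q * (φ p * ψ (p.1 + q.1, p.2 + q.2))) q.1 q.2
  rw [key φ ψ, key ψ φ]
  refine congrArg _ ?_
  refine Fintype.sum_equiv (Equiv.neg (ZMod N × ZMod N))
    (fun q => ∑ p : ZMod N × ZMod N, J q * (φ p * ψ (p.1 + q.1, p.2 + q.2)))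
    (fun q => ∑ p : ZMod N × ZMod N, J q * (ψ p * φ (p.1 + q.1, p.2 + q.2))) ?_
  intro q
  have hq : J (-q : ZMod N × ZMod N) = J q := by
    rw [hJeven q]; rfl
  simp only [Equiv.neg_apply, hq, Prod.fst_neg, Prod.snd_neg]
  calc ∑ p : ZMod N × ZMod N, J q * (φ p * ψ (p.1 + q.1, p.2 + q.2))
      = ∑ p : ZMod N × ZMod N, J q * (ψ (p.1 + q.1, p.2 + q.2) * φ p) := by
        refine Finset.sum_congr rfl fun p _ => by ring
    _ = ∑ p : ZMod N × ZMod N,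
          J q * (ψ (p.1 - q.1 + q.1, p.2 - q.2 + q.2) * φ (p.1 - q.1, p.2 - q.2)) :=
        (shift_sum_s11 (fun p => J q * (ψ (p.1 + q.1, p.2 + q.2) * φ p)) q.1 q.2).symm
    _ = ∑ x : ZMod N × ZMod N, J q * (ψ x * φ (x.1 + -q.1, x.2 + -q.2)) := by
        simp [sub_add_cancel, sub_eq_add_neg]

theorem semidiscrete_energy_dissipation {N : ℕ} [NeZero N] (h β : ℝ)
    (hh : 0 < h) (hβ : 0 < β)
    (J : ZMod N × ZMod N → ℝ)
    (hJeven : ∀ q : ZMod N × ZMod N, J q = J (-q.1, -q.2))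
    (f : ℝ → ℝ) (hf : Differentiable ℝ f)
    (ρ ρ' w ux uy Fx Fy : ℝ → ZMod N × ZMod N → ℝ)
    (hρ : ∀ (t : ℝ) (p : ZMod N × ZMod N), HasDerivAt (fun s => ρ s p) (ρ' t p) t)
    (hw : ∀ (t : ℝ) (p : ZMod N × ZMod N),
      w t p = deriv f (ρ t p) + 2 * ρ t p - 2 * conv h J (ρ t) p)
    (hux : ∀ (t : ℝ) (p : ZMod N × ZMod N),
      ux t p = -(w t (p.1 + 1, p.2) - w t p) / h)
    (huy : ∀ (t : ℝ) (p : ZMod N × ZMod N),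
      uy t p = -(w t (p.1, p.2 + 1) - w t p) / h)
    (hFx : ∀ (t : ℝ) (p : ZMod N × ZMod N),
      Fx t p = Mob β (ρ t p) (ρ t (p.1 + 1, p.2)) * max (ux t p) 0
        + Mob β (ρ t (p.1 + 1, p.2)) (ρ t p) * min (ux t p) 0)
    (hFy : ∀ (t : ℝ) (p : ZMod N × ZMod N),
      Fy t p = Mob β (ρ t p) (ρ t (p.1, p.2 + 1)) * max (uy t p) 0
        + Mob β (ρ t (p.1, p.2 + 1)) (ρ t p) * min (uy t p) 0)
    (hscheme : ∀ (t : ℝ) (p : ZMod N × ZMod N),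
      ρ' t p = -(1 / h) *
        (Fx t p - Fx t (p.1 - 1, p.2) + Fy t p - Fy t (p.1, p.2 - 1))) :
    ∀ t : ℝ,
      HasDerivAt
        (fun s => h ^ 2 * ∑ p : ZMod N × ZMod N, (f (ρ s p) + (ρ s p) ^ 2)
          - ip h (conv h J (ρ s)) (ρ s))
        (ip h (ρ' t) (w t)) t
      ∧ ip h (ρ' t) (w t) ≤ 0 := by
  intro t
  have hne : h ≠ 0 := ne_of_gt hh
  -- derivative of the convolution term
  have hconvd : ∀ p : ZMod N × ZMod N,
      HasDerivAt (fun s => conv h J (ρ s) p) (conv h J (ρ' t) p) t := by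
    intro p
    simp only [conv]
    exact (HasDerivAt.fun_sum fun q _ => ((hρ t (p.1 - q.1, p.2 - q.2)).const_mul (J q))).const_mul
      (h ^ 2)
  have hA : ∀ p : ZMod N × ZMod N,
      HasDerivAt (fun s => f (ρ s p) + (ρ s p) ^ 2)
        (deriv f (ρ t p) * ρ' t p + 2 * ρ t p * ρ' t p) t := by
    intro p
    have h1 : HasDerivAt (fun s => f (ρ s p)) (deriv f (ρ t p) * ρ' t p) t :=
      (hf (ρ t p)).hasDerivAt.comp t (hρ t p)
    have h2 := (hρ t p).fun_pow 2
    refine h1.add ?_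
    simpa using h2
  have hB : HasDerivAt (fun s => ip h (conv h J (ρ s)) (ρ s))
      (h ^ 2 * ∑ p : ZMod N × ZMod N,
        (conv h J (ρ' t) p * ρ t p + conv h J (ρ t) p * ρ' t p)) t := by
    simp only [ip]
    exact (HasDerivAt.fun_sum fun p _ => (hconvd p).mul (hρ t p)).const_mul (h ^ 2)
  have hE : HasDerivAt
      (fun s => h ^ 2 * ∑ p : ZMod N × ZMod N, (f (ρ s p) + (ρ s p) ^ 2)
        - ip h (conv h J (ρ s)) (ρ s))
      (h ^ 2 * ∑ p : ZMod N × ZMod N, (deriv f (ρ t p) * ρ' t p + 2 * ρ t p * ρ' t p)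
        - h ^ 2 * ∑ p : ZMod N × ZMod N,
            (conv h J (ρ' t) p * ρ t p + conv h J (ρ t) p * ρ' t p)) t :=
    ((HasDerivAt.fun_sum fun p _ => hA p).const_mul (h ^ 2)).sub hB
  have hsplit : ∑ p : ZMod N × ZMod N,
      (conv h J (ρ' t) p * ρ t p + conv h J (ρ t) p * ρ' t p)
      = 2 * ∑ p : ZMod N × ZMod N, conv h J (ρ t) p * ρ' t p := by
    rw [Finset.sum_add_distrib, conv_symm h J hJeven (ρ' t) (ρ t)]; ring
  have hval : h ^ 2 * ∑ p : ZMod N × ZMod N,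
        (deriv f (ρ t p) * ρ' t p + 2 * ρ t p * ρ' t p)
      - h ^ 2 * ∑ p : ZMod N × ZMod N,
          (conv h J (ρ' t) p * ρ t p + conv h J (ρ t) p * ρ' t p)
      = ip h (ρ' t) (w t) := by
    rw [hsplit]
    have hrhs : ∑ p : ZMod N × ZMod N, ρ' t p * w t p
        = ∑ p : ZMod N × ZMod N, (deriv f (ρ t p) * ρ' t p + 2 * ρ t p * ρ' t p)
          - 2 * ∑ p : ZMod N × ZMod N, conv h J (ρ t) p * ρ' t p := by
      rw [Finset.mul_sum, ← Finset.sum_sub_distrib]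
      refine Finset.sum_congr rfl fun p _ => ?_
      rw [hw t p]; ring
    rw [ip, hrhs]; ring
  refine ⟨hval ▸ hE, ?_⟩
  -- dissipation inequality
  have hshiftx : ∑ p : ZMod N × ZMod N, Fx t (p.1 - 1, p.2) * w t p
      = ∑ p : ZMod N × ZMod N, Fx t p * w t (p.1 + 1, p.2) := by
    rw [← shift_sum_s11 (fun p => Fx t p * w t (p.1 + 1, p.2)) 1 0]
    refine Finset.sum_congr rfl fun p _ => by simp [sub_add_cancel]
  have hshifty : ∑ p : ZMod N × ZMod N, Fy t (p.1, p.2 - 1) * w t p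
      = ∑ p : ZMod N × ZMod N, Fy t p * w t (p.1, p.2 + 1) := by
    rw [← shift_sum_s11 (fun p => Fy t p * w t (p.1, p.2 + 1)) 0 1]
    refine Finset.sum_congr rfl fun p _ => by simp [sub_add_cancel]
  have hwx : ∀ p : ZMod N × ZMod N, w t p - w t (p.1 + 1, p.2) = h * ux t p := by
    intro p; rw [hux t p]; field_simp; ring
  have hwy : ∀ p : ZMod N × ZMod N, w t p - w t (p.1, p.2 + 1) = h * uy t p := by
    intro p; rw [huy t p]; field_simp; ring
  have hsum : ∑ p : ZMod N × ZMod N, ρ' t p * w t p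
      = -∑ p : ZMod N × ZMod N, (Fx t p * ux t p + Fy t p * uy t p) := by
    calc ∑ p : ZMod N × ZMod N, ρ' t p * w t p
        = ∑ p : ZMod N × ZMod N, (-(1 / h)) *
            (Fx t p * w t p - Fx t (p.1 - 1, p.2) * w t p
              + Fy t p * w t p - Fy t (p.1, p.2 - 1) * w t p) := by
          refine Finset.sum_congr rfl fun p _ => by rw [hscheme t p]; ring
      _ = (-(1 / h)) * ((∑ p : ZMod N × ZMod N, Fx t p * w t p)
            - (∑ p : ZMod N × ZMod N, Fx t (p.1 - 1, p.2) * w t p)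
            + (∑ p : ZMod N × ZMod N, Fy t p * w t p)
            - (∑ p : ZMod N × ZMod N, Fy t (p.1, p.2 - 1) * w t p)) := by
          rw [← Finset.mul_sum]
          congr 1
          rw [← Finset.sum_sub_distrib, ← Finset.sum_add_distrib, ← Finset.sum_sub_distrib]
      _ = (-(1 / h)) * ((∑ p : ZMod N × ZMod N, Fx t p * (w t p - w t (p.1 + 1, p.2)))
            + (∑ p : ZMod N × ZMod N, Fy t p * (w t p - w t (p.1, p.2 + 1)))) := by
          rw [hshiftx, hshifty]
          congr 1
          simp only [mul_sub, Finset.sum_sub_distrib]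
          ring
      _ = (-(1 / h)) * (h * ∑ p : ZMod N × ZMod N, (Fx t p * ux t p + Fy t p * uy t p)) := by
          congr 1
          rw [Finset.mul_sum, ← Finset.sum_add_distrib]
          refine Finset.sum_congr rfl fun p _ => by rw [hwx p, hwy p]; ring
      _ = -∑ p : ZMod N × ZMod N, (Fx t p * ux t p + Fy t p * uy t p) := by
          field_simp
  have hMob : ∀ x y : ℝ, 0 ≤ Mob β x y := by
    intro x y; unfold Mob; positivity
  have hmax : ∀ u : ℝ, 0 ≤ max u 0 * u := by
    intro u
    rcases le_total 0 u with hu | hu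
    · rw [max_eq_left hu]; exact mul_self_nonneg u
    · rw [max_eq_right hu]; simp
  have hmin : ∀ u : ℝ, 0 ≤ min u 0 * u := by
    intro u
    rcases le_total u 0 with hu | hu
    · rw [min_eq_left hu]; exact mul_self_nonneg u
    · rw [min_eq_right hu]; simp
  have hpt : ∀ p : ZMod N × ZMod N, 0 ≤ Fx t p * ux t p + Fy t p * uy t p := by
    intro p
    rw [hFx t p, hFy t p]
    have h1 := mul_nonneg (hMob (ρ t p) (ρ t (p.1 + 1, p.2))) (hmax (ux t p))
    have h2 := mul_nonneg (hMob (ρ t (p.1 + 1, p.2)) (ρ t p)) (hmin (ux t p))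
    have h3 := mul_nonneg (hMob (ρ t p) (ρ t (p.1, p.2 + 1))) (hmax (uy t p))
    have h4 := mul_nonneg (hMob (ρ t (p.1, p.2 + 1)) (ρ t p)) (hmin (uy t p))
    nlinarith
  have hS : 0 ≤ ∑ p : ZMod N × ZMod N, (Fx t p * ux t p + Fy t p * uy t p) :=
    Finset.sum_nonneg fun p _ => hpt p
  rw [ip, hsum]
  have : (0:ℝ) ≤ h ^ 2 := sq_nonneg h
  nlinarith
end
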